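/- Let λ be a dominant integral weight and I ⊆ {1,…,n}, write λ = Σ m_i α_i, and let F_I be the standard parabolic face, i.e. the set of points μ of the weight polytope P whose coefficient of α_i equals m_i for every i ∈ I. Let I̅^0 be the set of indices j such that α_j lies in the connected component of the extended Dynkin diagram, restricted to the complement of I together with the extra node −λ, that contains −λ. Then F_I is the convex hull of W_{I̅^0}·λ. -/

import Mathlib

open RealInnerProductSpace

noncomputable section

variable {E : Type*} [NormedAddCommGroup E] [InnerProductSpace ℝ E] [FiniteDimensional ℝ E]

/-- Reflection in the hyperplane orthogonal to `β`. -/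
def sref (β : E) : E ≃ₗᵢ[ℝ] E := Submodule.reflection (ℝ ∙ β)ᗮ

/-- Data of a system of simple roots of a (crystallographic, irreducible) root system:
the simple roots form a basis of the euclidean space, Cartan integers are integral,
distinct simple roots have nonpositive inner products, and the Dynkin diagram is connected. -/
structure RootData (n : ℕ) (E : Type*) [NormedAddCommGroup E] [InnerProductSpace ℝ E] where
  α : Fin n → E
  b : Module.Basis (Fin n) ℝ E
  hb : ∀ i, b i = α i
  cartan : ∀ i j, ∃ z : ℤ, (z : ℝ) * ⟪α j, α j⟫ = 2 * ⟪α i, α j⟫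
  offdiag : ∀ i j : Fin n, i ≠ j → ⟪α i, α j⟫ ≤ 0
  conn : ∀ i j : Fin n, Relation.ReflTransGen (fun a b => a ≠ b ∧ ⟪α a, α b⟫ ≠ 0) i j

namespace RootData

variable {n : ℕ} (S : RootData n E)

/-- The simple reflections. -/
def s (i : Fin n) : E ≃ₗᵢ[ℝ] E := sref (S.α i)

/-- The Weyl group, generated by the simple reflections. -/
def W : Subgroup (E ≃ₗᵢ[ℝ] E) := Subgroup.closure (Set.range S.s)

/-- The standard parabolic subgroup generated by the simple reflections indexed by `I`. -/
def WI (I : Set (Fin n)) : Subgroup (E ≃ₗᵢ[ℝ] E) := Subgroup.closure (S.s '' I)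

/-- The set of roots:  the Weyl group orbit of the simple roots. -/
def roots : Set E := {β | ∃ w ∈ S.W, ∃ i, β = w (S.α i)}

/-- `x` is dominant: nonnegative inner product with every simple root. -/
def Dominant (x : E) : Prop := ∀ i, 0 ≤ ⟪x, S.α i⟫

/-- The dominant weight `λ = Σ mᵢ αᵢ` (with nonnegative integer coefficients). -/
def lam (m : Fin n → ℕ) : E := ∑ j, (m j : ℝ) • S.α j

/-- `λ` is an integral weight: `2(λ,αᵢ)/(αᵢ,αᵢ)` is a (nonnegative) integer. -/
def IntegralDom (m : Fin n → ℕ) : Prop :=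
  ∀ i, ∃ z : ℕ, (z : ℝ) * ⟪S.α i, S.α i⟫ = 2 * ⟪S.lam m, S.α i⟫

/-- The Weyl group orbit of a point. -/
def orbit (x : E) : Set E := (fun w : E ≃ₗᵢ[ℝ] E => w x) '' (S.W : Set (E ≃ₗᵢ[ℝ] E))

/-- The weight polytope: the convex hull of the Weyl group orbit of `λ`. -/
def poly (m : Fin n → ℕ) : Set E := convexHull ℝ (S.orbit (S.lam m))

/-- `c μ i` is the coefficient of `αᵢ` when `μ` is expressed in the basis of simple roots. -/
def c (μ : E) (i : Fin n) : ℝ := S.b.repr μ i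

/-- The set of weights `P(λ)`:  points of the weight polytope lying in the root lattice. -/
def Pw (m : Fin n → ℕ) : Set E := {μ ∈ S.poly m | ∀ i, ∃ z : ℤ, S.c μ i = z}

/-- `P_I`: the weights whose `αᵢ`-coefficient equals `mᵢ` for all `i ∈ I`. -/
def P_ (m : Fin n → ℕ) (I : Set (Fin n)) : Set E :=
  {μ ∈ S.Pw m | ∀ i ∈ I, S.c μ i = m i}

/-- The standard parabolic face `F_I` of the weight polytope. -/
def F_ (m : Fin n → ℕ) (I : Set (Fin n)) : Set E :=
  {x ∈ S.poly m | ∀ i ∈ I, S.c x i = m i}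

/-- The dominance order: `μ ≤ ν` iff `ν - μ` is a nonnegative integral sum of simple roots. -/
def wle (μ ν : E) : Prop := ∃ a : Fin n → ℕ, ν - μ = ∑ i, (a i : ℝ) • S.α i

/-- Adjacency in the extended Dynkin diagram with extra node `-λ` (encoded as `none`). -/
def adj (m : Fin n → ℕ) : Option (Fin n) → Option (Fin n) → Prop
  | none, none => False
  | none, some j => 0 < ⟪S.lam m, S.α j⟫
  | some i, none => 0 < ⟪S.lam m, S.α i⟫
  | some i, some j => i ≠ j ∧ ⟪S.α i, S.α j⟫ ≠ 0

/-- One step in the extended Dynkin diagram, staying within the vertices `{-λ} ∪ {αₖ : k ∈ K}`. -/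
def within (m : Fin n → ℕ) (K : Set (Fin n)) (a b : Option (Fin n)) : Prop :=
  S.adj m a b ∧ (∀ i, a = some i → i ∈ K) ∧ (∀ i, b = some i → i ∈ K)

/-- `I̅⁰`: indices of the simple roots in the connected component of `-λ` in the subdiagram
of the extended Dynkin diagram on the complement of `I` together with `-λ`. -/
def comp0 (m : Fin n → ℕ) (I : Set (Fin n)) : Set (Fin n) :=
  {j | j ∉ I ∧ Relation.ReflTransGen (S.within m Iᶜ) none (some j)}

/-- The subdiagram of the extended Dynkin diagram on `{-λ} ∪ {αₖ : k ∈ K}` is connected. -/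
def ConnWith (m : Fin n → ℕ) (K : Set (Fin n)) : Prop :=
  ∀ j ∈ K, Relation.ReflTransGen (S.within m K) none (some j)

/-- `ω` is the `i`-th fundamental coweight: `(ω, αⱼ) = δᵢⱼ`. -/
def IsCoweight (i : Fin n) (ω : E) : Prop :=
  ∀ j, ⟪ω, S.α j⟫ = if j = i then 1 else 0

end RootData

variable {n : ℕ}

section PartAC

variable {n : ℕ} (S : RootData n E)

namespace RootData

theorem alpha_ne_zero (i : Fin n) : S.α i ≠ 0 := S.hb i ▸ S.b.ne_zero i

end RootData

theorem rinner_self_pos {x : E} (hx : x ≠ 0) : (0:ℝ) < ⟪x, x⟫ :=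
  lt_of_le_of_ne real_inner_self_nonneg
    (fun h => hx ((inner_self_eq_zero (𝕜 := ℝ)).1 h.symm))

namespace RootData

theorem inner_self_pos' (i : Fin n) : (0:ℝ) < ⟪S.α i, S.α i⟫ :=
  rinner_self_pos (S.alpha_ne_zero i)

end RootData

theorem sref_apply {β : E} (hβ : β ≠ 0) (x : E) :
    sref β x = x - (2 * ⟪β, x⟫ / ⟪β, β⟫) • β := by
  have hne : ⟪β, β⟫ ≠ (0:ℝ) := ne_of_gt (rinner_self_pos hβ)
  rw [sref, Submodule.reflection_apply]
  rw [Submodule.starProjection_orthogonal_val, Submodule.starProjection_singleton]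
  have hnorm : (‖β‖:ℝ)^2 = ⟪β, β⟫ := (real_inner_self_eq_norm_sq β).symm
  rw [hnorm]
  simp only [RCLike.ofReal_real_eq_id, id]
  match_scalars <;> ring

namespace RootData

theorem s_apply (i : Fin n) (x : E) :
    S.s i x = x - (2 * ⟪S.α i, x⟫ / ⟪S.α i, S.α i⟫) • S.α i :=
  sref_apply (S.alpha_ne_zero i) x

theorem s_apply_self (i : Fin n) : S.s i (S.α i) = - S.α i := by
  rw [s_apply]
  have hne : ⟪S.α i, S.α i⟫ ≠ (0:ℝ) := ne_of_gt (S.inner_self_pos' i)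
  have h2 : 2 * ⟪S.α i, S.α i⟫ / ⟪S.α i, S.α i⟫ = 2 := by field_simp
  rw [h2]
  module

theorem s_apply_orth (i : Fin n) (x : E) (h : ⟪S.α i, x⟫ = 0) : S.s i x = x := by
  rw [s_apply, h]
  simp

theorem s_mul_self (i : Fin n) : S.s i * S.s i = 1 := by
  ext x
  have : (S.s i) ((S.s i) x) = x := Submodule.reflection_involutive _ x
  simpa [LinearIsometryEquiv.coe_mul] using this

theorem s_inv (i : Fin n) : (S.s i)⁻¹ = S.s i :=
  inv_eq_of_mul_eq_one_left (S.s_mul_self i)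

/-- product of a word of simple reflections -/
def wordProd (l : List (Fin n)) : E ≃ₗᵢ[ℝ] E := (l.map S.s).prod

theorem wordProd_nil : S.wordProd [] = 1 := rfl

theorem wordProd_cons (i : Fin n) (l : List (Fin n)) :
    S.wordProd (i :: l) = S.s i * S.wordProd l := by
  simp [wordProd]

theorem wordProd_append (l l' : List (Fin n)) :
    S.wordProd (l ++ l') = S.wordProd l * S.wordProd l' := by
  simp [wordProd]

theorem wordProd_mem {J : Set (Fin n)} {l : List (Fin n)} (h : ∀ i ∈ l, i ∈ J) :
    S.wordProd l ∈ S.WI J := by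
  apply Subgroup.list_prod_mem
  intro x hx
  rcases List.mem_map.1 hx with ⟨i, hi, rfl⟩
  exact Subgroup.subset_closure ⟨i, h i hi, rfl⟩

theorem wordProd_reverse (l : List (Fin n)) :
    S.wordProd l.reverse = (S.wordProd l)⁻¹ := by
  induction l with
  | nil => simp [wordProd]
  | cons a l ih =>
    rw [List.reverse_cons, wordProd_append, wordProd_cons, ih]
    simp [wordProd, s_inv]

theorem exists_word {J : Set (Fin n)} {w : E ≃ₗᵢ[ℝ] E} (h : w ∈ S.WI J) :
    ∃ l : List (Fin n), (∀ i ∈ l, i ∈ J) ∧ S.wordProd l = w := by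
  induction h using Subgroup.closure_induction with
  | mem x hx =>
    rcases hx with ⟨i, hi, rfl⟩
    exact ⟨[i], by simpa using hi, by simp [wordProd]⟩
  | one => exact ⟨[], by simp, rfl⟩
  | mul x y hx hy ihx ihy =>
    rcases ihx with ⟨l₁, h₁, rfl⟩
    rcases ihy with ⟨l₂, h₂, rfl⟩
    refine ⟨l₁ ++ l₂, ?_, (S.wordProd_append l₁ l₂)⟩
    intro i hi
    rcases List.mem_append.1 hi with h | h
    · exact h₁ i h
    · exact h₂ i h
  | inv x hx ihx =>
    rcases ihx with ⟨l₁, h₁, rfl⟩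
    refine ⟨l₁.reverse, ?_, S.wordProd_reverse l₁⟩
    intro i hi
    exact h₁ i (List.mem_reverse.1 hi)

/-- set of lengths of words for `w` with letters in `J` -/
def lenSet (J : Set (Fin n)) (w : E ≃ₗᵢ[ℝ] E) : Set ℕ :=
  {k | ∃ l : List (Fin n), (∀ i ∈ l, i ∈ J) ∧ S.wordProd l = w ∧ l.length = k}

/-- minimal word length -/
noncomputable def len (J : Set (Fin n)) (w : E ≃ₗᵢ[ℝ] E) : ℕ := sInf (S.lenSet J w)

theorem len_le {J : Set (Fin n)} {l : List (Fin n)} (h : ∀ i ∈ l, i ∈ J) :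
    S.len J (S.wordProd l) ≤ l.length := Nat.sInf_le ⟨l, h, rfl, rfl⟩

theorem exists_min_word {J : Set (Fin n)} {w : E ≃ₗᵢ[ℝ] E} (h : w ∈ S.WI J) :
    ∃ l : List (Fin n), (∀ i ∈ l, i ∈ J) ∧ S.wordProd l = w ∧ l.length = S.len J w := by
  have hne : (S.lenSet J w).Nonempty := by
    rcases S.exists_word h with ⟨l, hl, rfl⟩
    exact ⟨l.length, l, hl, rfl, rfl⟩
  exact Nat.sInf_mem hne

theorem len_one (J : Set (Fin n)) : S.len J 1 = 0 :=
  Nat.le_zero.1 (by simpa [wordProd_nil] using S.len_le (J := J) (l := []) (by simp))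

theorem eq_one_of_len_eq_zero {J : Set (Fin n)} {w : E ≃ₗᵢ[ℝ] E} (h : w ∈ S.WI J)
    (h0 : S.len J w = 0) : w = 1 := by
  rcases S.exists_min_word h with ⟨l, _, hw, hlen⟩
  rw [h0] at hlen
  rw [List.length_eq_zero_iff] at hlen
  subst hlen
  exact hw.symm

theorem len_mul_word_le {J : Set (Fin n)} {w : E ≃ₗᵢ[ℝ] E} (h : w ∈ S.WI J)
    {l' : List (Fin n)} (hl' : ∀ i ∈ l', i ∈ J) :
    S.len J (w * S.wordProd l') ≤ S.len J w + l'.length := by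
  rcases S.exists_min_word h with ⟨l, hl, hw, hlen⟩
  have : S.wordProd (l ++ l') = w * S.wordProd l' := by rw [wordProd_append, hw]
  have hmemw : ∀ i ∈ l ++ l', i ∈ J := by
    intro i hi
    rcases List.mem_append.1 hi with h | h
    · exact hl i h
    · exact hl' i h
  calc S.len J (w * S.wordProd l') = S.len J (S.wordProd (l ++ l')) := by rw [this]
    _ ≤ (l ++ l').length := S.len_le hmemw
    _ = S.len J w + l'.length := by simp [hlen]

/-- determinant, for the parity argument -/
noncomputable def pdet (w : E ≃ₗᵢ[ℝ] E) : ℝ := LinearMap.det (w.toLinearEquiv : E →ₗ[ℝ] E)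

theorem pdet_mul (f g : E ≃ₗᵢ[ℝ] E) : pdet (f * g) = pdet f * pdet g := by
  unfold pdet
  have h : ((f * g).toLinearEquiv : E →ₗ[ℝ] E)
      = (f.toLinearEquiv : E →ₗ[ℝ] E) ∘ₗ (g.toLinearEquiv : E →ₗ[ℝ] E) := rfl
  rw [h, LinearMap.det_comp]

theorem pdet_one : pdet (1 : E ≃ₗᵢ[ℝ] E) = 1 := by
  unfold pdet
  have : ((1 : E ≃ₗᵢ[ℝ] E).toLinearEquiv : E →ₗ[ℝ] E) = LinearMap.id := by ext x; rfl
  rw [this, LinearMap.det_id]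

theorem pdet_s (i : Fin n) : pdet (S.s i) = -1 := by
  unfold pdet
  have h1 : ((S.s i).toLinearEquiv : E →ₗ[ℝ] E)
      = (Submodule.reflection ((ℝ ∙ S.α i)ᗮ)).toLinearEquiv := rfl
  rw [h1]
  have h2 : LinearMap.det ((Submodule.reflection ((ℝ ∙ S.α i)ᗮ)).toLinearEquiv : E →ₗ[ℝ] E)
      = (-1 : ℝ) ^ (Module.finrank ℝ ((ℝ ∙ S.α i)ᗮᗮ)) := Submodule.det_reflection _
  rw [h2, Submodule.orthogonal_orthogonal, finrank_span_singleton (S.alpha_ne_zero i)]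
  norm_num

theorem pdet_word (l : List (Fin n)) : pdet (S.wordProd l) = (-1 : ℝ) ^ l.length := by
  induction l with
  | nil => simpa [wordProd_nil] using pdet_one
  | cons a l ih =>
    rw [wordProd_cons, pdet_mul, ih, S.pdet_s a]
    simp [pow_succ]
    try ring

theorem pdet_eq_len {J : Set (Fin n)} {w : E ≃ₗᵢ[ℝ] E} (h : w ∈ S.WI J) :
    pdet w = (-1 : ℝ) ^ (S.len J w) := by
  rcases S.exists_min_word h with ⟨l, _, hw, hlen⟩
  rw [← hw, pdet_word, hlen, hw]

theorem len_mul_s_ne {J : Set (Fin n)} {w : E ≃ₗᵢ[ℝ] E} (h : w ∈ S.WI J)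
    {i : Fin n} (hi : i ∈ J) : S.len J (w * S.s i) ≠ S.len J w := by
  intro heq
  have hmem : w * S.s i ∈ S.WI J := mul_mem h (Subgroup.subset_closure ⟨i, hi, rfl⟩)
  have h1 : pdet (w * S.s i) = (-1 : ℝ) ^ (S.len J (w * S.s i)) := S.pdet_eq_len hmem
  rw [pdet_mul, S.pdet_s i, S.pdet_eq_len h, heq] at h1
  have hne : (-1 : ℝ) ^ (S.len J w) ≠ 0 := pow_ne_zero _ (by norm_num)
  have h2 : ((-1:ℝ)) ^ S.len J w = 0 := by linarith
  exact hne h2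

/-- nonnegative coordinates, supported in `J` -/
def NNJ (J : Set (Fin n)) (x : E) : Prop :=
  (∀ k, 0 ≤ S.b.repr x k) ∧ ∀ k, k ∉ J → S.b.repr x k = 0

theorem repr_alpha (i k : Fin n) : S.b.repr (S.α i) k = if i = k then 1 else 0 := by
  rw [← S.hb i, S.b.repr_self i]
  exact Finsupp.single_apply

theorem NNJ_zero (J : Set (Fin n)) : S.NNJ J 0 := by
  constructor <;> intro k <;> simp

theorem NNJ_add {J : Set (Fin n)} {x y : E} (hx : S.NNJ J x) (hy : S.NNJ J y) :
    S.NNJ J (x + y) := by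
  constructor
  · intro k; rw [map_add]; exact add_nonneg (hx.1 k) (hy.1 k)
  · intro k hk; rw [map_add]; simp [hx.2 k hk, hy.2 k hk]

theorem NNJ_smul {J : Set (Fin n)} {x : E} {c : ℝ} (hc : 0 ≤ c) (hx : S.NNJ J x) :
    S.NNJ J (c • x) := by
  constructor
  · intro k; rw [map_smul]; exact mul_nonneg hc (hx.1 k)
  · intro k hk; rw [map_smul]; simp [hx.2 k hk]

theorem NNJ_alpha {J : Set (Fin n)} {i : Fin n} (hi : i ∈ J) : S.NNJ J (S.α i) := by
  constructor
  · intro k; rw [repr_alpha]; split <;> norm_num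
  · intro k hk
    rw [repr_alpha]
    split
    · next h => exact absurd (h ▸ hi) hk
    · rfl

end RootData

end PartAC


namespace R2

abbrev V := ℤ × ℤ

structure Mat where
  c1 : V
  c2 : V
deriving DecidableEq

def act (A : Mat) (v : V) : V :=
  (v.1 * A.c1.1 + v.2 * A.c2.1, v.1 * A.c1.2 + v.2 * A.c2.2)

def mul (A B : Mat) : Mat := ⟨act A B.c1, act A B.c2⟩

def idM : Mat := ⟨(1,0),(0,1)⟩

theorem act_mul (A B : Mat) (v : V) : act (mul A B) v = act A (act B v) := by
  cases A; cases B
  simp only [act, mul, Prod.ext_iff]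
  constructor <;> ring

theorem act_idM (v : V) : act idM v = v := by simp [act, idM]

theorem mul_idM (A : Mat) : mul idM A = A := by
  cases A; simp [mul, act_idM]

theorem mul_assoc' (A B C : Mat) : mul (mul A B) C = mul A (mul B C) := by
  rcases C with ⟨c1, c2⟩
  calc mul (mul A B) ⟨c1,c2⟩ = ⟨act (mul A B) c1, act (mul A B) c2⟩ := rfl
    _ = ⟨act A (act B c1), act A (act B c2)⟩ := by rw [act_mul, act_mul]
    _ = mul A (mul B ⟨c1,c2⟩) := rfl

def M1 (a : ℤ) : Mat := ⟨(-1,0), (-a,1)⟩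
def M2 (b : ℤ) : Mat := ⟨(1,-b), (0,-1)⟩

def toM (a b : ℤ) (x : Bool) : Mat := bif x then M2 b else M1 a

/-- product of the word, leftmost letter acts last;
`matProd (u ++ [x]) = mul (matProd u) (toM x)`. -/
def matProd (a b : ℤ) (u : List Bool) : Mat :=
  u.foldl (fun g x => mul g (toM a b x)) idM

theorem matProd_nil (a b : ℤ) : matProd a b [] = idM := rfl

theorem foldl_mul (a b : ℤ) (u : List Bool) (g h : Mat) :
    u.foldl (fun g x => mul g (toM a b x)) (mul g h)
      = mul g (u.foldl (fun g x => mul g (toM a b x)) h) := by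
  induction u generalizing h with
  | nil => rfl
  | cons y u ih =>
    simp only [List.foldl_cons]
    rw [mul_assoc', ih]

theorem matProd_cons (a b : ℤ) (x : Bool) (u : List Bool) :
    matProd a b (x :: u) = mul (toM a b x) (matProd a b u) := by
  show u.foldl (fun g x => mul g (toM a b x)) (mul idM (toM a b x)) = _
  have h1 : mul idM (toM a b x) = mul (toM a b x) idM := by
    rw [mul_idM]
    cases x <;> simp [toM, M1, M2, mul, act, idM]
  rw [h1, foldl_mul]
  rfl

theorem act_e1 (A : Mat) : act A (1,0) = A.c1 := by
  cases A; simp [act]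

theorem matProd_append (a b : ℤ) (u v : List Bool) :
    matProd a b (u ++ v) = (v.foldl (fun g x => mul g (toM a b x)) (matProd a b u)) := by
  simp [matProd, List.foldl_append]

theorem matProd_concat (a b : ℤ) (u : List Bool) (x : Bool) :
    matProd a b (u ++ [x]) = mul (matProd a b u) (toM a b x) := by
  simp [matProd_append, List.foldl]

def Pos (v : V) : Prop := 0 ≤ v.1 ∧ 0 ≤ v.2

instance : DecidablePred Pos := fun v => instDecidableAnd

def negV (v : V) : V := (-v.1, -v.2)

/-- number of inversions of `g` relative to the positive root list `L`. -/
def nInv (L : List V) (g : Mat) : ℕ := L.countP (fun v => decide (negV (act g v) ∈ L))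

structure Data where
  a : ℤ
  b : ℤ
  L : List V
  pairs : List (Mat × List Bool)
  idm : idM ∈ pairs.map Prod.fst
  base : nInv L idM = 0
  closed : ∀ g ∈ pairs.map Prod.fst, ∀ x : Bool, mul g (toM a b x) ∈ pairs.map Prod.fst
  step : ∀ g ∈ pairs.map Prod.fst, ∀ x : Bool, nInv L (mul g (toM a b x)) ≤ nInv L g + 1
  dstep : ∀ g ∈ pairs.map Prod.fst, negV (act g (1,0)) ∈ L → nInv L (mul g (M1 a)) < nInv L g
  words : ∀ p ∈ pairs, matProd a b p.2 = p.1 ∧ p.2.length ≤ nInv L p.1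
  tri : ∀ g ∈ pairs.map Prod.fst, Pos (act g (1,0)) ∨ negV (act g (1,0)) ∈ L

theorem Data.mem_and_nInv (D : Data) (u : List Bool) :
    matProd D.a D.b u ∈ D.pairs.map Prod.fst ∧ nInv D.L (matProd D.a D.b u) ≤ u.length := by
  induction u using List.reverseRecOn with
  | nil => exact ⟨D.idm, by simp [matProd_nil, D.base]⟩
  | append_singleton u x ih =>
    rw [matProd_concat]
    refine ⟨D.closed _ ih.1 x, ?_⟩
    calc nInv D.L (mul (matProd D.a D.b u) (toM D.a D.b x))
        ≤ nInv D.L (matProd D.a D.b u) + 1 := D.step _ ih.1 x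
      _ ≤ u.length + 1 := by omega
      _ = (u ++ [x]).length := by simp

/-- The main rank-two output: either `u` maps `e₁ = α_s` into the positive cone, or there is a
word strictly shorter than `u` whose product is `(matProd u) * M1` (i.e. the word `u ++ [s]`
is not reduced). -/
theorem Data.main (D : Data) (u : List Bool) :
    Pos (act (matProd D.a D.b u) (1,0)) ∨
    ∃ u' : List Bool, matProd D.a D.b u' = mul (matProd D.a D.b u) (M1 D.a) ∧
      u'.length + 1 ≤ u.length := by
  obtain ⟨hmem, hn⟩ := D.mem_and_nInv u
  rcases D.tri _ hmem with h | h
  · exact Or.inl h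
  · right
    have hd := D.dstep _ hmem h
    have hmem' : mul (matProd D.a D.b u) (M1 D.a) ∈ D.pairs.map Prod.fst := by
      have := D.closed _ hmem false
      simpa [toM] using this
    rcases List.mem_map.1 hmem' with ⟨p, hp, hpe⟩
    obtain ⟨hw, hl⟩ := D.words p hp
    rw [hpe] at hl
    exact ⟨p.2, by rw [hw, hpe], by omega⟩

/-! Concrete instances -/

def rot (a b : ℤ) : Mat := mul (M1 a) (M2 b)

def rpow (a b : ℤ) : ℕ → Mat
  | 0 => idM
  | k+1 => mul (rpow a b k) (rot a b)

def wR (m k : ℕ) : List Bool :=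
  if 2*k ≤ 2*(m-k) then (List.replicate k [false, true]).flatten
  else (List.replicate (m-k) [true, false]).flatten

def wF (m k : ℕ) : List Bool :=
  if 2*k+1 ≤ 2*(m-k)-1 then (List.replicate k [false,true]).flatten ++ [false]
  else true :: (List.replicate (m-k-1) [false,true]).flatten

def mkPairs (a b : ℤ) (m : ℕ) : List (Mat × List Bool) :=
  (List.range m).flatMap fun k => [(rpow a b k, wR m k), (mul (rpow a b k) (M1 a), wF m k)]

def D00 : Data :=
  ⟨0, 0, [(1,0),(0,1)], mkPairs 0 0 2,
    by decide, by decide, by decide, by decide, by decide, by decide, by decide⟩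

def D11 : Data :=
  ⟨-1, -1, [(1,0),(0,1),(1,1)], mkPairs (-1) (-1) 3,
    by decide, by decide, by decide, by decide, by decide, by decide, by decide⟩

def D12 : Data :=
  ⟨-1, -2, [(1,0),(0,1),(1,1),(1,2)], mkPairs (-1) (-2) 4,
    by decide, by decide, by decide, by decide, by decide, by decide, by decide⟩

def D21 : Data :=
  ⟨-2, -1, [(1,0),(0,1),(1,1),(2,1)], mkPairs (-2) (-1) 4,
    by decide, by decide, by decide, by decide, by decide, by decide, by decide⟩

def D13 : Data :=
  ⟨-1, -3, [(1,0),(0,1),(1,1),(1,2),(1,3),(2,3)], mkPairs (-1) (-3) 6,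
    by decide, by decide, by decide, by decide, by decide, by decide, by decide⟩

def D31 : Data :=
  ⟨-3, -1, [(1,0),(0,1),(1,1),(2,1),(3,1),(3,2)], mkPairs (-3) (-1) 6,
    by decide, by decide, by decide, by decide, by decide, by decide, by decide⟩

end R2
section PartD

variable {n : ℕ} (S : RootData n E)

namespace RootData

theorem mul_apply (f g : E ≃ₗᵢ[ℝ] E) (x : E) : (f * g) x = f (g x) := rfl

theorem one_apply (x : E) : (1 : E ≃ₗᵢ[ℝ] E) x = x := rfl

/-- the word in `Fin n` corresponding to a boolean word in the letters `i`, `t` -/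
def mapW (i t : Fin n) (u : List Bool) : List (Fin n) :=
  u.map (fun x => bif x then t else i)

theorem mapW_length (i t : Fin n) (u : List Bool) : (mapW i t u).length = u.length := by
  simp [mapW]

theorem mapW_mem {J : Set (Fin n)} {i t : Fin n} (hi : i ∈ J) (ht : t ∈ J)
    (u : List Bool) : ∀ j ∈ mapW i t u, j ∈ J := by
  intro j hj
  rcases List.mem_map.1 hj with ⟨x, _, rfl⟩
  cases x
  · exact hi
  · exact ht

theorem s_alpha_other {i t : Fin n} {a : ℤ}
    (ha : (a:ℝ) * ⟪S.α i, S.α i⟫ = 2 * ⟪S.α t, S.α i⟫) :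
    S.s i (S.α t) = S.α t - (a:ℝ) • S.α i := by
  rw [s_apply]
  have hne : ⟪S.α i, S.α i⟫ ≠ (0:ℝ) := ne_of_gt (S.inner_self_pos' i)
  have hcoef : 2 * ⟪S.α i, S.α t⟫ / ⟪S.α i, S.α i⟫ = (a:ℝ) := by
    have hsym : ⟪S.α i, S.α t⟫ = ⟪S.α t, S.α i⟫ := real_inner_comm _ _
    rw [hsym, ← ha]
    field_simp
  rw [hcoef]

/-- real-coefficient version of the integral 2×2 matrix action -/
def actR (A : R2.Mat) (p : ℝ × ℝ) : ℝ × ℝ :=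
  (p.1 * (A.c1.1:ℝ) + p.2 * (A.c2.1:ℝ), p.1 * (A.c1.2:ℝ) + p.2 * (A.c2.2:ℝ))

theorem actR_cast (A : R2.Mat) (v : R2.V) :
    actR A ((v.1:ℝ), (v.2:ℝ)) = (((R2.act A v).1 : ℝ), ((R2.act A v).2 : ℝ)) := by
  rw [Prod.ext_iff]
  unfold actR R2.act
  constructor <;> (push_cast; ring)

/-- the point with coordinates `p` in the plane spanned by `α i`, `α t` -/
def PsiR (i t : Fin n) (p : ℝ × ℝ) : E := p.1 • S.α i + p.2 • S.α t

theorem s_PsiR_left {i t : Fin n} {a : ℤ}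
    (ha : (a:ℝ) * ⟪S.α i, S.α i⟫ = 2 * ⟪S.α t, S.α i⟫) (p : ℝ × ℝ) :
    S.s i (S.PsiR i t p) = S.PsiR i t (actR (R2.M1 a) p) := by
  simp only [PsiR, actR, R2.M1]
  rw [map_add, map_smul, map_smul, s_apply_self, S.s_alpha_other ha]
  push_cast
  module

theorem s_PsiR_right {i t : Fin n} {b : ℤ}
    (hb : (b:ℝ) * ⟪S.α t, S.α t⟫ = 2 * ⟪S.α i, S.α t⟫) (p : ℝ × ℝ) :
    S.s t (S.PsiR i t p) = S.PsiR i t (actR (R2.M2 b) p) := by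
  simp only [PsiR, actR, R2.M2]
  rw [map_add, map_smul, map_smul, s_apply_self, S.s_alpha_other hb]
  push_cast
  module

theorem word_PsiR {i t : Fin n} {a b : ℤ}
    (ha : (a:ℝ) * ⟪S.α i, S.α i⟫ = 2 * ⟪S.α t, S.α i⟫)
    (hb : (b:ℝ) * ⟪S.α t, S.α t⟫ = 2 * ⟪S.α i, S.α t⟫)
    (u : List Bool) (p : ℝ × ℝ) :
    S.wordProd (mapW i t u) (S.PsiR i t p)
      = S.PsiR i t (actR (R2.matProd a b u) p) := by
  induction u generalizing p with
  | nil =>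
    simp [mapW, wordProd_nil, R2.matProd_nil, one_apply, actR, R2.idM]
  | cons x u ih =>
    have hcons : mapW i t (x :: u) = (bif x then t else i) :: mapW i t u := rfl
    rw [hcons, wordProd_cons, R2.matProd_cons, mul_apply, ih]
    have hact : actR (R2.mul (R2.toM a b x) (R2.matProd a b u)) p
        = actR (R2.toM a b x) (actR (R2.matProd a b u) p) := by
      rcases R2.matProd a b u with ⟨⟨c11,c12⟩,⟨c21,c22⟩⟩
      rcases R2.toM a b x with ⟨⟨d11,d12⟩,⟨d21,d22⟩⟩
      simp [actR, R2.mul, R2.act]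
      push_cast
      constructor <;> ring
    rw [hact]
    cases x
    · exact S.s_PsiR_left ha _
    · exact S.s_PsiR_right hb _

theorem word_fix_orth {i t : Fin n} (u : List Bool) (z : E)
    (hzi : ⟪S.α i, z⟫ = 0) (hzt : ⟪S.α t, z⟫ = 0) :
    S.wordProd (mapW i t u) z = z := by
  induction u with
  | nil => rfl
  | cons x u ih =>
    have hcons : mapW i t (x :: u) = (bif x then t else i) :: mapW i t u := rfl
    rw [hcons, wordProd_cons, mul_apply, ih]
    cases x
    · exact S.s_apply_orth i z hzi
    · exact S.s_apply_orth t z hzt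

theorem word_eq_of_mat_eq {i t : Fin n} {a b : ℤ}
    (ha : (a:ℝ) * ⟪S.α i, S.α i⟫ = 2 * ⟪S.α t, S.α i⟫)
    (hb : (b:ℝ) * ⟪S.α t, S.α t⟫ = 2 * ⟪S.α i, S.α t⟫)
    {u u' : List Bool} (h : R2.matProd a b u = R2.matProd a b u') :
    S.wordProd (mapW i t u) = S.wordProd (mapW i t u') := by
  ext x
  set K : Submodule ℝ E := Submodule.span ℝ {S.α i, S.α t} with hK
  have hαi : S.α i ∈ K := Submodule.subset_span (by simp)
  have hαt : S.α t ∈ K := Submodule.subset_span (by simp)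
  have hdec : x = (K.orthogonalProjectionOnto x : E) + (x - (K.orthogonalProjectionOnto x : E)) := by
    abel
  set q : E := x - (K.orthogonalProjectionOnto x : E) with hq
  have hqK : q ∈ Kᗮ := Submodule.sub_starProjection_mem_orthogonal x
  have hqi : ⟪S.α i, q⟫ = 0 := hqK (S.α i) hαi
  have hqt : ⟪S.α t, q⟫ = 0 := hqK (S.α t) hαt
  obtain ⟨c, d, hcd⟩ := Submodule.mem_span_pair.1 (K.orthogonalProjectionOnto x).2
  have hp : (K.orthogonalProjectionOnto x : E) = S.PsiR i t (c, d) := by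
    rw [← hcd]; rfl
  rw [hdec, map_add, map_add, hp]
  rw [S.word_PsiR ha hb, S.word_PsiR ha hb, h]
  rw [S.word_fix_orth u q hqi hqt, S.word_fix_orth u' q hqi hqt]

/-- linear independence of two distinct simple roots, coordinate version -/
theorem alpha_indep {i t : Fin n} (hit : i ≠ t) {c d : ℝ}
    (h : c • S.α i + d • S.α t = 0) : c = 0 ∧ d = 0 := by
  have hr := congrArg (fun y => (S.b.repr y : Fin n → ℝ)) h
  have hi := congrArg (fun f => f i) hr
  have ht := congrArg (fun f => f t) hr
  simp only [map_add, map_smul] at hi ht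
  rw [Finsupp.coe_add] at hi ht
  simp [Finsupp.coe_smul, S.repr_alpha, hit, hit.symm, Ne.symm] at hi ht
  constructor
  · simpa using hi
  · simpa using ht

theorem cartan_pair {i t : Fin n} (hit : i ≠ t) :
    ∃ a b : ℤ, ((a:ℝ) * ⟪S.α i, S.α i⟫ = 2 * ⟪S.α t, S.α i⟫)
      ∧ ((b:ℝ) * ⟪S.α t, S.α t⟫ = 2 * ⟪S.α i, S.α t⟫)
      ∧ ((a,b) = (0,0) ∨ (a,b) = (-1,-1) ∨ (a,b) = (-1,-2) ∨ (a,b) = (-2,-1)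
          ∨ (a,b) = (-1,-3) ∨ (a,b) = (-3,-1)) := by
  obtain ⟨a, ha⟩ := S.cartan t i
  obtain ⟨b, hb⟩ := S.cartan i t
  refine ⟨a, b, ha, hb, ?_⟩
  have hii : (0:ℝ) < ⟪S.α i, S.α i⟫ := S.inner_self_pos' i
  have htt : (0:ℝ) < ⟪S.α t, S.α t⟫ := S.inner_self_pos' t
  have hoff : ⟪S.α t, S.α i⟫ ≤ (0:ℝ) := S.offdiag t i (Ne.symm hit)
  have hoff' : ⟪S.α i, S.α t⟫ ≤ (0:ℝ) := S.offdiag i t hit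
  have haR : (a:ℝ) ≤ 0 := by nlinarith
  have hbR : (b:ℝ) ≤ 0 := by nlinarith
  have ha0 : a ≤ 0 := by exact_mod_cast haR
  have hb0 : b ≤ 0 := by exact_mod_cast hbR
  -- strict Cauchy-Schwarz
  have hz : (⟪S.α t, S.α t⟫ • S.α i - ⟪S.α i, S.α t⟫ • S.α t) ≠ 0 := by
    intro h
    have h' : ⟪S.α t, S.α t⟫ • S.α i + (-⟪S.α i, S.α t⟫) • S.α t = 0 := by
      rw [neg_smul]; rw [← sub_eq_add_neg]; exact h
    have := (S.alpha_indep hit h').1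
    exact ne_of_gt htt this
  have hzz : (0:ℝ) < ⟪⟪S.α t, S.α t⟫ • S.α i - ⟪S.α i, S.α t⟫ • S.α t,
      ⟪S.α t, S.α t⟫ • S.α i - ⟪S.α i, S.α t⟫ • S.α t⟫ := rinner_self_pos hz
  have hexp : ⟪⟪S.α t, S.α t⟫ • S.α i - ⟪S.α i, S.α t⟫ • S.α t,
      ⟪S.α t, S.α t⟫ • S.α i - ⟪S.α i, S.α t⟫ • S.α t⟫
      = ⟪S.α t, S.α t⟫ * (⟪S.α i, S.α i⟫ * ⟪S.α t, S.α t⟫ - ⟪S.α i, S.α t⟫ * ⟪S.α i, S.α t⟫) := by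
    rw [inner_sub_left, inner_sub_right, inner_sub_right]
    rw [real_inner_smul_left, real_inner_smul_left, real_inner_smul_left,
      real_inner_smul_left, real_inner_smul_right, real_inner_smul_right,
      real_inner_smul_right, real_inner_smul_right]
    rw [real_inner_comm (S.α t) (S.α i)]
    ring
  rw [hexp] at hzz
  have hcs : ⟪S.α i, S.α t⟫ * ⟪S.α i, S.α t⟫ < ⟪S.α i, S.α i⟫ * ⟪S.α t, S.α t⟫ := by
    nlinarith
  have hsym : ⟪S.α t, S.α i⟫ = ⟪S.α i, S.α t⟫ := real_inner_comm _ _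
  have hab : ((a*b : ℤ):ℝ) < 4 := by
    push_cast
    nlinarith
  have hab4 : a * b ≤ 3 := by
    have : a * b < 4 := by exact_mod_cast hab
    omega
  have hiff : a = 0 ↔ b = 0 := by
    constructor
    · intro h0
      subst h0
      simp at ha
      have : ⟪S.α i, S.α t⟫ = 0 := by rw [← hsym]; linarith
      have : (b:ℝ) * ⟪S.α t, S.α t⟫ = 0 := by rw [hb, this]; ring
      have hbz : (b:ℝ) = 0 := by
        rcases mul_eq_zero.1 this with h | h
        · exact h
        · exact absurd h (ne_of_gt htt)
      exact_mod_cast hbz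
    · intro h0
      subst h0
      simp at hb
      have : ⟪S.α t, S.α i⟫ = 0 := by rw [hsym]; linarith
      have : (a:ℝ) * ⟪S.α i, S.α i⟫ = 0 := by rw [ha, this]; ring
      have haz : (a:ℝ) = 0 := by
        rcases mul_eq_zero.1 this with h | h
        · exact h
        · exact absurd h (ne_of_gt hii)
      exact_mod_cast haz
  by_cases hA : a = 0
  · left
    have hB := hiff.1 hA
    simp [hA, hB]
  · have hB : b ≠ 0 := fun h => hA (hiff.2 h)
    have ha1 : a ≤ -1 := by omega
    have hb1 : b ≤ -1 := by omega
    have ha3 : -3 ≤ a := by nlinarith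
    have hb3 : -3 ≤ b := by nlinarith
    interval_cases a <;> interval_cases b <;> simp_all <;> omega

theorem r2_exists {a b : ℤ}
    (h : (a,b) = (0,0) ∨ (a,b) = (-1,-1) ∨ (a,b) = (-1,-2) ∨ (a,b) = (-2,-1)
      ∨ (a,b) = (-1,-3) ∨ (a,b) = (-3,-1)) :
    ∃ D : R2.Data, D.a = a ∧ D.b = b := by
  rcases h with h|h|h|h|h|h <;> simp only [Prod.mk.injEq] at h <;> obtain ⟨rfl, rfl⟩ := h
  · exact ⟨R2.D00, rfl, rfl⟩
  · exact ⟨R2.D11, rfl, rfl⟩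
  · exact ⟨R2.D12, rfl, rfl⟩
  · exact ⟨R2.D21, rfl, rfl⟩
  · exact ⟨R2.D13, rfl, rfl⟩
  · exact ⟨R2.D31, rfl, rfl⟩

end RootData

end PartD
section PartE

variable {n : ℕ} (S : RootData n E)

namespace RootData

theorem s_mem_WI {J : Set (Fin n)} {i : Fin n} (hi : i ∈ J) : S.s i ∈ S.WI J :=
  Subgroup.subset_closure ⟨i, hi, rfl⟩

theorem wordProd_singleton (i : Fin n) : S.wordProd [i] = S.s i := by
  simp [wordProd]

/-- Main positivity theorem (Björner–Brenti induction): if `ℓ(w sᵢ) > ℓ(w)` then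
`w αᵢ` is a nonnegative combination of the simple roots indexed by `J`. -/
theorem posJ (J : Set (Fin n)) :
    ∀ N : ℕ, ∀ w : E ≃ₗᵢ[ℝ] E, w ∈ S.WI J → S.len J w ≤ N →
      ∀ i ∈ J, S.len J w < S.len J (w * S.s i) → S.NNJ J (w (S.α i)) := by
  intro N
  induction N with
  | zero =>
    intro w hw hlen i hi _
    have hw1 : w = 1 := S.eq_one_of_len_eq_zero hw (Nat.le_zero.1 hlen)
    rw [hw1, one_apply]
    exact S.NNJ_alpha hi
  | succ N ih =>
    intro w hw hlen i hi hlt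
    by_cases h0 : S.len J w = 0
    · have hw1 : w = 1 := S.eq_one_of_len_eq_zero hw h0
      rw [hw1, one_apply]
      exact S.NNJ_alpha hi
    -- find the last letter t of a minimal word
    obtain ⟨l, hlJ, hlw, hllen⟩ := S.exists_min_word hw
    have hlne : l ≠ [] := by
      intro h
      rw [h] at hllen
      exact h0 (by simpa using hllen.symm)
    obtain ⟨t, lr', hlr⟩ : ∃ t lr', l.reverse = t :: lr' := by
      cases hrev : l.reverse with
      | nil => exact absurd (by simpa using hrev) hlne
      | cons t lr' => exact ⟨t, lr', rfl⟩
    have hl' : l = lr'.reverse ++ [t] := by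
      have := congrArg List.reverse hlr
      simpa using this
    have htJ : t ∈ J := hlJ t (by rw [hl']; simp)
    have hlr'J : ∀ j ∈ lr'.reverse, j ∈ J := by
      intro j hj
      exact hlJ j (by rw [hl']; exact List.mem_append.2 (Or.inl hj))
    have hwt_eq : w * S.s t = S.wordProd lr'.reverse := by
      rw [← hlw, hl', wordProd_append, wordProd_singleton, mul_assoc, s_mul_self, mul_one]
    have hwt : S.len J (w * S.s t) < S.len J w := by
      rw [hwt_eq]
      calc S.len J (S.wordProd lr'.reverse) ≤ lr'.reverse.length := S.len_le hlr'J
        _ < l.length := by rw [hl']; simp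
        _ = S.len J w := hllen
    have hti : t ≠ i := by
      intro h
      rw [h] at hwt
      omega
    -- coset minimisation
    set Cset : Set ℕ := {c | ∃ v : E ≃ₗᵢ[ℝ] E, v ∈ S.WI J ∧ S.len J v = c ∧
      ∃ u : List Bool, w = v * S.wordProd (mapW i t u) ∧
        S.len J v + u.length = S.len J w} with hCset
    have hCne : S.len J w ∈ Cset := by
      refine ⟨w, hw, rfl, [], ?_, by simp⟩
      simp [mapW, wordProd_nil]
    obtain ⟨v, hvJ, hvlen, u, hvw, hsum⟩ := Nat.sInf_mem ⟨_, hCne⟩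
    have hmin : ∀ c ∈ Cset, sInf Cset ≤ c := fun c hc => Nat.sInf_le hc
    -- the minimal coset representative ascends by both s i and s t
    have hvs : ∀ x : Bool, S.len J v < S.len J (v * S.s (bif x then t else i)) := by
      intro x
      set j : Fin n := bif x then t else i with hj
      have hjJ : j ∈ J := by cases x <;> simp [hj, hi, htJ]
      rcases lt_or_gt_of_ne (S.len_mul_s_ne hvJ hjJ) with hless | hmore
      · exfalso
        set v' : E ≃ₗᵢ[ℝ] E := v * S.s j with hv'
        have hv'J : v' ∈ S.WI J := mul_mem hvJ (S.s_mem_WI hjJ)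
        have hvv' : v = v' * S.s j := by
          rw [hv', mul_assoc, s_mul_self, mul_one]
        have hw' : w = v' * S.wordProd (mapW i t (x :: u)) := by
          have hcons : mapW i t (x :: u) = j :: mapW i t u := rfl
          rw [hcons, wordProd_cons, hvw, hvv']
          rw [mul_assoc]
        have hge : S.len J w ≤ S.len J v' + (u.length + 1) := by
          have := S.len_mul_word_le hv'J (mapW_mem hi htJ (x :: u))
          rw [← hw'] at this
          simpa [mapW_length] using this
        have hle : S.len J v' + (u.length + 1) ≤ S.len J w := by
          have h1 : S.len J v' + 1 ≤ S.len J v := hless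
          omega
        have hmem : S.len J v' ∈ Cset := ⟨v', hv'J, rfl, x :: u, hw', by
          simp only [List.length_cons]; omega⟩
        have := hmin _ hmem
        omega
      · exact hmore
    have hvltw : S.len J v < S.len J w := by
      have hle : S.len J v ≤ S.len J w := by omega
      rcases lt_or_eq_of_le hle with h | h
      · exact h
      · exfalso
        have hu0 : u.length = 0 := by omega
        have hu : u = [] := List.length_eq_zero_iff.1 hu0
        have hwv : w = v := by
          rw [hvw, hu]
          simp [mapW, wordProd_nil]
        have := hvs true
        simp only [cond_true] at this
        rw [← hwv] at this
        omega
    -- inductive hypotheses at v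
    have hNv : S.len J v ≤ N := by omega
    have ihi : S.NNJ J (v (S.α i)) := by
      have := hvs false
      simp only [cond_false] at this
      exact ih v hvJ hNv i hi this
    have iht : S.NNJ J (v (S.α t)) := by
      have := hvs true
      simp only [cond_true] at this
      exact ih v hvJ hNv t htJ this
    -- rank-two analysis
    obtain ⟨a, b, ha, hb, hcase⟩ := S.cartan_pair hti.symm
    obtain ⟨D, hDa, hDb⟩ := r2_exists hcase
    have hwPsi : S.wordProd (mapW i t u) (S.α i)
        = S.PsiR i t (actR (R2.matProd a b u) (1, 0)) := by
      have h1 : S.α i = S.PsiR i t ((1:ℝ), (0:ℝ)) := by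
        simp [PsiR]
      rw [h1, S.word_PsiR ha hb]
    rcases hDD : (R2.Data.main D u) with hpos | hshort
    · -- positive case
      clear hDD
      rw [hDa, hDb] at hpos
      have he1 : R2.act (R2.matProd a b u) (1,0) = (R2.matProd a b u).c1 := R2.act_e1 _
      rw [he1] at hpos
      have hx : (0:ℝ) ≤ ((R2.matProd a b u).c1.1 : ℝ) := by exact_mod_cast hpos.1
      have hy : (0:ℝ) ≤ ((R2.matProd a b u).c1.2 : ℝ) := by exact_mod_cast hpos.2
      have hwai : w (S.α i) = ((R2.matProd a b u).c1.1 : ℝ) • v (S.α i)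
          + ((R2.matProd a b u).c1.2 : ℝ) • v (S.α t) := by
        rw [hvw, mul_apply, hwPsi]
        have hactR : actR (R2.matProd a b u) (1, 0)
            = (((R2.matProd a b u).c1.1 : ℝ), ((R2.matProd a b u).c1.2 : ℝ)) := by
          have := actR_cast (R2.matProd a b u) (1,0)
          simp only [Int.cast_one, Int.cast_zero] at this
          rw [this, R2.act_e1]
        rw [hactR]
        simp [PsiR, map_add, map_smul]
      rw [hwai]
      exact S.NNJ_add (S.NNJ_smul hx ihi) (S.NNJ_smul hy iht)
    · -- contradiction case: the word can be shortened
      exfalso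
      clear hDD
      rw [hDa, hDb] at hshort
      obtain ⟨u', hu'mat, hu'len⟩ := hshort
      have hmat : R2.matProd a b (u ++ [false]) = R2.matProd a b u' := by
        rw [R2.matProd_concat, hu'mat]
        rfl
      have hgroup : S.wordProd (mapW i t (u ++ [false])) = S.wordProd (mapW i t u') :=
        S.word_eq_of_mat_eq ha hb hmat
      have hmap : mapW i t (u ++ [false]) = mapW i t u ++ [i] := by
        simp [mapW]
      have hws : w * S.s i = v * S.wordProd (mapW i t u') := by
        rw [← hgroup, hmap, wordProd_append, wordProd_singleton, hvw, mul_assoc]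
      have hlen2 : S.len J (w * S.s i) ≤ S.len J v + u'.length := by
        have := S.len_mul_word_le hvJ (mapW_mem hi htJ u')
        rw [← hws] at this
        simpa [mapW_length] using this
      omega

end RootData

end PartE
section PartF

variable {n : ℕ} (S : RootData n E)

namespace RootData

/-- Lemma A: for a `J`-dominant vector, `λ - wλ` is a nonnegative combination of
the simple roots indexed by `J`, for every `w` in the parabolic subgroup `W_J`. -/
theorem lemA (J : Set (Fin n)) (Λ : E) (hdom : ∀ j ∈ J, 0 ≤ ⟪Λ, S.α j⟫) :
    ∀ N : ℕ, ∀ w : E ≃ₗᵢ[ℝ] E, w ∈ S.WI J → S.len J w ≤ N → S.NNJ J (Λ - w Λ) := by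
  intro N
  induction N with
  | zero =>
    intro w hw hlen
    have hw1 : w = 1 := S.eq_one_of_len_eq_zero hw (Nat.le_zero.1 hlen)
    rw [hw1, one_apply, sub_self]
    exact S.NNJ_zero J
  | succ N ih =>
    intro w hw hlen
    by_cases h0 : S.len J w = 0
    · have hw1 : w = 1 := S.eq_one_of_len_eq_zero hw h0
      rw [hw1, one_apply, sub_self]
      exact S.NNJ_zero J
    obtain ⟨l, hlJ, hlw, hllen⟩ := S.exists_min_word hw
    have hlne : l ≠ [] := by
      intro h
      rw [h] at hllen
      exact h0 (by simpa using hllen.symm)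
    obtain ⟨j, lr', hlr⟩ : ∃ j lr', l.reverse = j :: lr' := by
      cases hrev : l.reverse with
      | nil => exact absurd (by simpa using hrev) hlne
      | cons j lr' => exact ⟨j, lr', rfl⟩
    have hl' : l = lr'.reverse ++ [j] := by
      have := congrArg List.reverse hlr
      simpa using this
    have hjJ : j ∈ J := hlJ j (by rw [hl']; simp)
    have hlr'J : ∀ k ∈ lr'.reverse, k ∈ J := by
      intro k hk
      exact hlJ k (by rw [hl']; exact List.mem_append.2 (Or.inl hk))
    set u : E ≃ₗᵢ[ℝ] E := S.wordProd lr'.reverse with hu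
    have huJ : u ∈ S.WI J := S.wordProd_mem hlr'J
    have hwu : w = u * S.s j := by
      rw [← hlw, hl', wordProd_append, wordProd_singleton]
    have hulen : S.len J u ≤ N := by
      have h1 : S.len J u ≤ lr'.reverse.length := S.len_le hlr'J
      have h2 : lr'.reverse.length + 1 = S.len J w := by
        rw [← hllen, hl']; simp
      omega
    have hup : S.len J u < S.len J (u * S.s j) := by
      rw [← hwu]
      have h1 : S.len J u ≤ lr'.reverse.length := S.len_le hlr'J
      have h2 : lr'.reverse.length + 1 = S.len J w := by
        rw [← hllen, hl']; simp
      omega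
    have hpos : S.NNJ J (u (S.α j)) := S.posJ J (S.len J u) u huJ le_rfl j hjJ hup
    -- the coefficient
    set tc : ℝ := 2 * ⟪S.α j, Λ⟫ / ⟪S.α j, S.α j⟫ with htc
    have htcnn : 0 ≤ tc := by
      apply div_nonneg
      · have := hdom j hjJ
        rw [real_inner_comm] at this
        linarith
      · exact le_of_lt (S.inner_self_pos' j)
    have hsj : S.s j Λ = Λ - tc • S.α j := by
      rw [s_apply]
    have hwΛ : w Λ = u Λ - tc • u (S.α j) := by
      rw [hwu, mul_apply, hsj, map_sub, map_smul]
    have hsplit : Λ - w Λ = (Λ - u Λ) + tc • u (S.α j) := by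
      rw [hwΛ]; abel
    rw [hsplit]
    exact S.NNJ_add (ih u huJ hulen) (S.NNJ_smul htcnn hpos)

/-- integrality package for an orbit point -/
def IntP (Λ x : E) : Prop :=
  (∀ k, ∃ z : ℤ, (z:ℝ) * ⟪S.α k, S.α k⟫ = 2 * ⟪x, S.α k⟫) ∧
  (∀ k, ∃ z : ℤ, S.b.repr (Λ - x) k = (z:ℝ))

theorem IntP_lam (m : Fin n → ℕ) (hint : S.IntegralDom m) : S.IntP (S.lam m) (S.lam m) := by
  constructor
  · intro k
    obtain ⟨z, hz⟩ := hint k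
    exact ⟨(z:ℤ), by exact_mod_cast hz⟩
  · intro k
    exact ⟨0, by simp⟩

theorem IntP_step (Λ x : E) (j : Fin n) (hx : S.IntP Λ x) : S.IntP Λ (S.s j x) := by
  obtain ⟨z, hz⟩ := hx.1 j
  have hne : ⟪S.α j, S.α j⟫ ≠ (0:ℝ) := ne_of_gt (S.inner_self_pos' j)
  have hsj : S.s j x = x - (z:ℝ) • S.α j := by
    rw [s_apply]
    congr 2
    have hsym : ⟪S.α j, x⟫ = ⟪x, S.α j⟫ := real_inner_comm _ _
    rw [hsym, ← hz]
    field_simp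
  constructor
  · intro k
    obtain ⟨zk, hzk⟩ := hx.1 k
    obtain ⟨c, hc⟩ := S.cartan j k
    refine ⟨zk - z * c, ?_⟩
    rw [hsj, inner_sub_left, real_inner_smul_left]
    push_cast
    linear_combination hzk - (z:ℝ) * hc
  · intro k
    obtain ⟨zk, hzk⟩ := hx.2 k
    refine ⟨zk + z * (if j = k then 1 else 0), ?_⟩
    have : Λ - S.s j x = (Λ - x) + (z:ℝ) • S.α j := by
      rw [hsj]; abel
    rw [this, map_add, map_smul]
    rw [Finsupp.coe_add, Pi.add_apply, Finsupp.coe_smul, Pi.smul_apply]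
    rw [hzk, S.repr_alpha]
    push_cast
    split <;> simp <;> ring

theorem IntP_word (Λ : E) (hΛ : S.IntP Λ Λ) (l : List (Fin n)) :
    S.IntP Λ (S.wordProd l Λ) := by
  induction l with
  | nil => exact hΛ
  | cons j l ih =>
    rw [wordProd_cons, mul_apply]
    exact S.IntP_step Λ _ j ih

theorem eq_of_nonneg_diff (Λ x : E) (hnorm : ‖x‖ = ‖Λ‖)
    (hnn : ∀ k, 0 ≤ S.b.repr (Λ - x) k) (hall : ∀ k, 0 ≤ ⟪x, S.α k⟫) : x = Λ := by
  have hD : Λ - x = ∑ k, (S.b.repr (Λ - x) k) • S.α k := by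
    have h1 := S.b.sum_repr (Λ - x)
    simp only [S.hb] at h1
    exact h1.symm
  have hxD : 0 ≤ ⟪x, Λ - x⟫ := by
    rw [hD, inner_sum]
    apply Finset.sum_nonneg
    intro k _
    rw [real_inner_smul_right]
    exact mul_nonneg (hnn k) (hall k)
  have hΛx : x + (Λ - x) = Λ := by abel
  have hexp : ⟪Λ, Λ⟫ = ⟪x,x⟫ + 2*⟪x, Λ - x⟫ + ⟪Λ - x, Λ - x⟫ := by
    conv_lhs => rw [← hΛx]
    exact real_inner_add_add_self _ _
  have hnormsq : ⟪Λ, Λ⟫ = ⟪x, x⟫ := by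
    rw [real_inner_self_eq_norm_sq, real_inner_self_eq_norm_sq, hnorm]
  have hDD : ⟪Λ - x, Λ - x⟫ ≤ 0 := by linarith
  have h0 : (Λ - x) = 0 := by
    have h00 : ⟪Λ - x, Λ - x⟫ = 0 := le_antisymm hDD real_inner_self_nonneg
    exact (inner_self_eq_zero (𝕜 := ℝ)).1 h00
  have := sub_eq_zero.1 h0
  exact this.symm

theorem inner_diff_alpha (Λ x : E) (k : Fin n) :
    ⟪Λ - x, S.α k⟫ = ∑ j, (S.b.repr (Λ - x) j) * ⟪S.α j, S.α k⟫ := by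
  have hD : Λ - x = ∑ j, (S.b.repr (Λ - x) j) • S.α j := by
    have h1 := S.b.sum_repr (Λ - x)
    simp only [S.hb] at h1
    exact h1.symm
  conv_lhs => rw [hD]
  rw [sum_inner]
  congr 1
  ext j
  rw [real_inner_smul_left]

end RootData

end PartF
section PartG

variable {n : ℕ} (S : RootData n E)

namespace RootData

theorem s_apply_int {j : Fin n} {x : E} {z : ℤ}
    (hz : (z:ℝ) * ⟪S.α j, S.α j⟫ = 2 * ⟪x, S.α j⟫) :
    S.s j x = x - (z:ℝ) • S.α j := by
  rw [s_apply]
  congr 2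
  have hsym : ⟪S.α j, x⟫ = ⟪x, S.α j⟫ := real_inner_comm _ _
  have hne : ⟪S.α j, S.α j⟫ ≠ (0:ℝ) := ne_of_gt (S.inner_self_pos' j)
  rw [hsym, ← hz]
  field_simp

theorem key (m : Fin n → ℕ) (hdom : S.Dominant (S.lam m)) (hint : S.IntegralDom m)
    (I : Set (Fin n)) :
    ∀ N : ℕ, ∀ l : List (Fin n),
      (∑ k, S.b.repr (S.lam m - S.wordProd l (S.lam m)) k) ≤ (N:ℝ) →
      (∀ i ∈ I, S.b.repr (S.lam m - S.wordProd l (S.lam m)) i = 0) →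
      (∃ v ∈ S.WI (S.comp0 m I), S.wordProd l (S.lam m) = v (S.lam m)) ∧
      (∀ k, S.b.repr (S.lam m - S.wordProd l (S.lam m)) k ≠ 0 → k ∈ S.comp0 m I) := by
  intro N
  induction N with
  | zero =>
    intro l hsum hI
    -- all coordinates are ≥ 0 and sum ≤ 0, so the difference is 0
    have hnn : S.NNJ Set.univ (S.lam m - S.wordProd l (S.lam m)) :=
      S.lemA Set.univ (S.lam m) (fun j _ => hdom j) (S.len Set.univ (S.wordProd l))
        (S.wordProd l) (S.wordProd_mem (fun i _ => Set.mem_univ i)) le_rfl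
    have hz : ∀ k, S.b.repr (S.lam m - S.wordProd l (S.lam m)) k = 0 := by
      intro k
      have h1 : ∀ j ∈ Finset.univ, (0:ℝ) ≤ S.b.repr (S.lam m - S.wordProd l (S.lam m)) j :=
        fun j _ => hnn.1 j
      by_contra hk
      have hklt : 0 < S.b.repr (S.lam m - S.wordProd l (S.lam m)) k :=
        lt_of_le_of_ne (hnn.1 k) (Ne.symm hk)
      have : (0:ℝ) < ∑ j, S.b.repr (S.lam m - S.wordProd l (S.lam m)) j :=
        Finset.sum_pos' h1 ⟨k, Finset.mem_univ k, hklt⟩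
      simp only [Nat.cast_zero] at hsum
      linarith
    have hxeq : S.wordProd l (S.lam m) = S.lam m := by
      have hdz : S.lam m - S.wordProd l (S.lam m) = 0 := by
        have h1 : S.b.repr (S.lam m - S.wordProd l (S.lam m)) = 0 := by
          ext k; exact hz k
        have h2 := S.b.sum_repr (S.lam m - S.wordProd l (S.lam m))
        rw [h1] at h2
        simpa using h2.symm
      have := sub_eq_zero.1 hdz
      exact this.symm
    constructor
    · exact ⟨1, one_mem _, by rw [hxeq, one_apply]⟩
    · intro k hk
      rw [hxeq] at hk
      simp at hk
  | succ N ih =>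
    intro l hsum hI
    by_cases hxΛ : S.wordProd l (S.lam m) = S.lam m
    · constructor
      · exact ⟨1, one_mem _, by rw [hxΛ, one_apply]⟩
      · intro k hk
        rw [hxΛ] at hk
        simp at hk
    -- setup
    have hnn : S.NNJ Set.univ (S.lam m - S.wordProd l (S.lam m)) :=
      S.lemA Set.univ (S.lam m) (fun j _ => hdom j) (S.len Set.univ (S.wordProd l))
        (S.wordProd l) (S.wordProd_mem (fun i _ => Set.mem_univ i)) le_rfl
    have hIntP : S.IntP (S.lam m) (S.wordProd l (S.lam m)) :=
      S.IntP_word (S.lam m) (S.IntP_lam m hint) l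
    -- find a negative inner product
    obtain ⟨k₀, hk₀⟩ : ∃ k₀, ⟪S.wordProd l (S.lam m), S.α k₀⟫ < 0 := by
      by_contra hcon
      push_neg at hcon
      exact hxΛ (S.eq_of_nonneg_diff (S.lam m) _ ((S.wordProd l).norm_map (S.lam m))
        hnn.1 hcon)
    -- k₀ is in the support
    have hdk₀ : 0 < S.b.repr (S.lam m - S.wordProd l (S.lam m)) k₀ := by
      rcases lt_or_eq_of_le (hnn.1 k₀) with h | h
      · exact h
      · exfalso
        have h1 : 0 < ⟪S.lam m - S.wordProd l (S.lam m), S.α k₀⟫ := by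
          rw [inner_sub_left]
          have := hdom k₀
          linarith
        have h2 : ⟪S.lam m - S.wordProd l (S.lam m), S.α k₀⟫ ≤ 0 := by
          rw [S.inner_diff_alpha]
          apply Finset.sum_nonpos
          intro j _
          by_cases hj : j = k₀
          · rw [hj, ← h]
            simp
          · exact mul_nonpos_of_nonneg_of_nonpos (hnn.1 j) (S.offdiag j k₀ hj)
        linarith
    have hk₀I : k₀ ∉ I := by
      intro hmem
      rw [hI k₀ hmem] at hdk₀
      exact lt_irrefl _ hdk₀
    -- the integral reflection step
    obtain ⟨z, hz⟩ := hIntP.1 k₀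
    have hzneg : (z:ℝ) < 0 := by
      have h1 := S.inner_self_pos' k₀
      nlinarith
    have hz1 : (z:ℝ) ≤ -1 := by
      have : z < 0 := by exact_mod_cast hzneg
      have : z ≤ -1 := by omega
      exact_mod_cast this
    have hsj : S.s k₀ (S.wordProd l (S.lam m))
        = S.wordProd l (S.lam m) - (z:ℝ) • S.α k₀ := S.s_apply_int hz
    have hx' : S.wordProd (k₀ :: l) (S.lam m)
        = S.wordProd l (S.lam m) - (z:ℝ) • S.α k₀ := by
      rw [wordProd_cons, mul_apply, hsj]
    have hdiff : S.lam m - S.wordProd (k₀ :: l) (S.lam m)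
        = (S.lam m - S.wordProd l (S.lam m)) + (z:ℝ) • S.α k₀ := by
      rw [hx']; abel
    have hrepr' : ∀ k, S.b.repr (S.lam m - S.wordProd (k₀ :: l) (S.lam m)) k
        = S.b.repr (S.lam m - S.wordProd l (S.lam m)) k
          + (z:ℝ) * (if k₀ = k then 1 else 0) := by
      intro k
      rw [hdiff, map_add, map_smul]
      rw [Finsupp.coe_add, Pi.add_apply, Finsupp.coe_smul, Pi.smul_apply, S.repr_alpha]
      simp [smul_eq_mul]
    -- new sum bound
    have hsum' : (∑ k, S.b.repr (S.lam m - S.wordProd (k₀ :: l) (S.lam m)) k) ≤ (N:ℝ) := by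
      have h1 : (∑ k, S.b.repr (S.lam m - S.wordProd (k₀ :: l) (S.lam m)) k)
          = (∑ k, S.b.repr (S.lam m - S.wordProd l (S.lam m)) k) + (z:ℝ) := by
        rw [Finset.sum_congr rfl (fun k _ => hrepr' k), Finset.sum_add_distrib]
        congr 1
        rw [← Finset.mul_sum, Finset.sum_ite_eq]
        simp
      rw [h1]
      push_cast at hsum
      linarith
    have hI' : ∀ i ∈ I, S.b.repr (S.lam m - S.wordProd (k₀ :: l) (S.lam m)) i = 0 := by
      intro i hi
      rw [hrepr' i]
      have hne : k₀ ≠ i := fun h => hk₀I (h ▸ hi)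
      rw [hI i hi]
      simp [hne]
    obtain ⟨⟨v', hv'mem, hv'eq⟩, hB'⟩ := ih (k₀ :: l) hsum' hI'
    -- part B
    have hB : ∀ k, S.b.repr (S.lam m - S.wordProd l (S.lam m)) k ≠ 0 → k ∈ S.comp0 m I := by
      intro k hk
      by_cases hd'k : S.b.repr (S.lam m - S.wordProd (k₀ :: l) (S.lam m)) k ≠ 0
      · exact hB' k hd'k
      · push_neg at hd'k
        have hkk₀ : k = k₀ := by
          by_contra hne
          have hne' : k₀ ≠ k := fun h => hne h.symm
          have h6 := hrepr' k
          rw [if_neg hne', mul_zero, add_zero, hd'k] at h6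
          exact hk h6.symm
        subst hkk₀
        -- need a path to k₀
        by_cases hlam : 0 < ⟪S.lam m, S.α k⟫
        · refine ⟨hk₀I, Relation.ReflTransGen.single ?_⟩
          refine ⟨hlam, (fun i hi => by cases hi), fun i hi => ?_⟩
          cases hi
          exact hk₀I
        · have hlam0 : ⟪S.lam m, S.α k⟫ = 0 :=
            le_antisymm (not_lt.1 hlam) (hdom k)
          -- z = - d k
          have hzd : (z:ℝ) = - S.b.repr (S.lam m - S.wordProd l (S.lam m)) k := by
            have h6 := hrepr' k
            rw [hd'k, if_pos rfl, mul_one] at h6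
            linarith
          -- the identity forcing a neighbour
          have hid : (∑ j ∈ Finset.univ.erase k,
              S.b.repr (S.lam m - S.wordProd l (S.lam m)) j * ⟪S.α j, S.α k⟫) < 0 := by
            have h1 : (z:ℝ) * ⟪S.α k, S.α k⟫
                = -2 * ⟪S.lam m - S.wordProd l (S.lam m), S.α k⟫ := by
              rw [inner_sub_left, hlam0]
              linarith [hz]
            have h2 : ⟪S.lam m - S.wordProd l (S.lam m), S.α k⟫
                = ∑ j, S.b.repr (S.lam m - S.wordProd l (S.lam m)) j * ⟪S.α j, S.α k⟫ :=
              S.inner_diff_alpha _ _ k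
            have h3 : (∑ j, S.b.repr (S.lam m - S.wordProd l (S.lam m)) j * ⟪S.α j, S.α k⟫)
                = S.b.repr (S.lam m - S.wordProd l (S.lam m)) k * ⟪S.α k, S.α k⟫
                  + ∑ j ∈ Finset.univ.erase k,
                    S.b.repr (S.lam m - S.wordProd l (S.lam m)) j * ⟪S.α j, S.α k⟫ := by
              rw [← Finset.sum_erase_add Finset.univ _ (Finset.mem_univ k)]
              ring
            have h4 := S.inner_self_pos' k
            have h5 : 0 < S.b.repr (S.lam m - S.wordProd l (S.lam m)) k := hdk₀
            nlinarith [hzd, h1, h2, h3]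
          obtain ⟨j, hjmem, hjneg⟩ : ∃ j ∈ Finset.univ.erase k,
              S.b.repr (S.lam m - S.wordProd l (S.lam m)) j * ⟪S.α j, S.α k⟫ < 0 := by
            by_contra hcon
            push_neg at hcon
            have : 0 ≤ ∑ j ∈ Finset.univ.erase k,
                S.b.repr (S.lam m - S.wordProd l (S.lam m)) j * ⟪S.α j, S.α k⟫ :=
              Finset.sum_nonneg hcon
            linarith
          have hjk : j ≠ k := (Finset.mem_erase.1 hjmem).1
          have hdj : S.b.repr (S.lam m - S.wordProd l (S.lam m)) j ≠ 0 := by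
            intro h
            rw [h] at hjneg
            simp at hjneg
          have hinnerjk : ⟪S.α j, S.α k⟫ ≠ 0 := by
            intro h
            rw [h] at hjneg
            simp at hjneg
          have hd'j : S.b.repr (S.lam m - S.wordProd (k :: l) (S.lam m)) j ≠ 0 := by
            rw [hrepr' j]
            have hkj : k ≠ j := fun h => hjk h.symm
            rw [if_neg hkj, mul_zero, add_zero]
            exact hdj
          obtain ⟨hjI, hjpath⟩ := hB' j hd'j
          refine ⟨hk₀I, hjpath.tail ?_⟩
          refine ⟨⟨hjk, hinnerjk⟩, fun i hi => ?_, fun i hi => ?_⟩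
          · cases hi
            exact hjI
          · cases hi
            exact hk₀I
    -- part A
    have hk₀c : k₀ ∈ S.comp0 m I := hB k₀ (ne_of_gt hdk₀)
    refine ⟨⟨S.s k₀ * v', mul_mem (S.s_mem_WI hk₀c) hv'mem, ?_⟩, hB⟩
    have hinv : S.s k₀ (S.wordProd (k₀ :: l) (S.lam m)) = S.wordProd l (S.lam m) := by
      rw [wordProd_cons, mul_apply, ← mul_apply (S.s k₀) (S.s k₀), s_mul_self, one_apply]
    rw [← hinv, hv'eq, mul_apply]

end RootData

end PartG
section PartH

variable {n : ℕ} (S : RootData n E)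

namespace RootData

theorem repr_lam (m : Fin n → ℕ) (k : Fin n) : S.b.repr (S.lam m) k = (m k : ℝ) := by
  have h1 : S.lam m = ∑ j, (m j : ℝ) • S.b j := by
    unfold lam
    simp only [S.hb]
  rw [h1, map_sum]
  simp only [map_smul]
  rw [Finsupp.finset_sum_apply]
  have h2 : ∀ j : Fin n, ((m j : ℝ) • S.b.repr (S.b j)) k
      = (m j : ℝ) * (if j = k then 1 else 0) := by
    intro j
    rw [Finsupp.smul_apply, S.b.repr_self]
    rw [Finsupp.single_apply]
    simp [smul_eq_mul]
  rw [Finset.sum_congr rfl (fun j _ => h2 j)]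
  simp [Finset.sum_ite_eq]

theorem W_eq_WI_univ : S.W = S.WI Set.univ := by
  unfold W WI
  rw [Set.image_univ]

theorem WI_le_W (J : Set (Fin n)) : S.WI J ≤ S.W := by
  apply Subgroup.closure_mono
  intro x hx
  rcases hx with ⟨i, _, rfl⟩
  exact ⟨i, rfl⟩

theorem c_le_of_orbit (m : Fin n → ℕ) (hdom : S.Dominant (S.lam m)) {x : E}
    (hx : x ∈ S.orbit (S.lam m)) (k : Fin n) :
    S.c x k ≤ (m k : ℝ) := by
  rcases hx with ⟨w, hw, rfl⟩
  have hw' : w ∈ S.WI Set.univ := S.W_eq_WI_univ ▸ hw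
  obtain ⟨l, hlJ, rfl⟩ := S.exists_word hw'
  have hnn : S.NNJ Set.univ (S.lam m - S.wordProd l (S.lam m)) :=
    S.lemA Set.univ (S.lam m) (fun j _ => hdom j) (S.len Set.univ (S.wordProd l))
      (S.wordProd l) (S.wordProd_mem (fun i _ => Set.mem_univ i)) le_rfl
  have h1 := hnn.1 k
  rw [map_sub, Finsupp.sub_apply, S.repr_lam m k] at h1
  unfold c
  linarith

theorem key' (m : Fin n → ℕ) (hdom : S.Dominant (S.lam m)) (hint : S.IntegralDom m)
    (I : Set (Fin n)) {x : E} (hx : x ∈ S.orbit (S.lam m))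
    (hIc : ∀ i ∈ I, S.c x i = (m i : ℝ)) :
    ∃ v ∈ S.WI (S.comp0 m I), x = v (S.lam m) := by
  rcases hx with ⟨w, hw, rfl⟩
  have hw' : w ∈ S.WI Set.univ := S.W_eq_WI_univ ▸ hw
  obtain ⟨l, hlJ, rfl⟩ := S.exists_word hw'
  obtain ⟨N, hN⟩ := exists_nat_ge (∑ k, S.b.repr (S.lam m - S.wordProd l (S.lam m)) k)
  have hI0 : ∀ i ∈ I, S.b.repr (S.lam m - S.wordProd l (S.lam m)) i = 0 := by
    intro i hi
    rw [map_sub, Finsupp.sub_apply, S.repr_lam m i]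
    have := hIc i hi
    unfold c at this
    linarith
  obtain ⟨⟨v, hv, hveq⟩, _⟩ := S.key m hdom hint I N l hN hI0
  exact ⟨v, hv, hveq⟩

theorem T_subset_F (m : Fin n → ℕ) (hdom : S.Dominant (S.lam m)) (I : Set (Fin n)) :
    (fun w : E ≃ₗᵢ[ℝ] E => w (S.lam m)) '' ((S.WI (S.comp0 m I) : Set (E ≃ₗᵢ[ℝ] E)))
      ⊆ S.F_ m I := by
  rintro x ⟨v, hv, rfl⟩
  constructor
  · -- in the polytope
    apply subset_convexHull
    exact ⟨v, S.WI_le_W _ hv, rfl⟩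
  · intro i hi
    have hnn : S.NNJ (S.comp0 m I) (S.lam m - v (S.lam m)) :=
      S.lemA (S.comp0 m I) (S.lam m) (fun j _ => hdom j) (S.len (S.comp0 m I) v) v hv le_rfl
    have hiI : i ∉ S.comp0 m I := by
      intro hmem
      exact hmem.1 hi
    have h0 := hnn.2 i hiI
    rw [map_sub, Finsupp.sub_apply, S.repr_lam m i] at h0
    unfold c
    linarith

theorem F_convex (m : Fin n → ℕ) (I : Set (Fin n)) : Convex ℝ (S.F_ m I) := by
  intro x hx y hy a bb ha hb hab
  constructor
  · exact (convex_convexHull ℝ _) hx.1 hy.1 ha hb hab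
  · intro i hi
    have hcx := hx.2 i hi
    have hcy := hy.2 i hi
    unfold c at hcx hcy ⊢
    rw [map_add, map_smul, map_smul]
    rw [Finsupp.add_apply, Finsupp.smul_apply, Finsupp.smul_apply]
    rw [smul_eq_mul, smul_eq_mul, hcx, hcy]
    rw [← add_mul, hab, one_mul]

theorem F_subset_conv (m : Fin n → ℕ) (hdom : S.Dominant (S.lam m))
    (hint : S.IntegralDom m) (I : Set (Fin n)) :
    S.F_ m I ⊆ convexHull ℝ ((fun w : E ≃ₗᵢ[ℝ] E => w (S.lam m)) ''
      ((S.WI (S.comp0 m I) : Set (E ≃ₗᵢ[ℝ] E)))) := by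
  intro x hx
  obtain ⟨hxp, hxc⟩ := hx
  rw [poly, convexHull_eq] at hxp
  obtain ⟨ι, t, w, z, hw0, hw1, hzs, hcm⟩ := hxp
  -- the filtered index set
  set t' : Finset ι := t.filter (fun i => w i ≠ 0) with ht'
  have ht'sub : t' ⊆ t := Finset.filter_subset _ _
  have hcm' : t'.centerMass w z = x := by
    rw [ht', Finset.centerMass_filter_ne_zero, hcm]
  have hsum' : ∑ i ∈ t', w i = 1 := by
    rw [ht', Finset.sum_filter_ne_zero, hw1]
  -- each point with nonzero weight satisfies the coordinate equations
  have hforced : ∀ i ∈ I, ∀ k ∈ t', S.c (z k) i = (m i : ℝ) := by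
    intro i hi k hk
    have hxsum : x = ∑ j ∈ t, w j • z j := by
      rw [← hcm, Finset.centerMass_eq_of_sum_1 _ _ hw1]
    have hcxi : S.c x i = ∑ j ∈ t, w j * S.c (z j) i := by
      unfold c
      rw [hxsum, map_sum, Finsupp.finset_sum_apply]
      apply Finset.sum_congr rfl
      intro j _
      rw [map_smul, Finsupp.smul_apply, smul_eq_mul]
    have hzero : ∑ j ∈ t, w j * ((m i : ℝ) - S.c (z j) i) = 0 := by
      have hsplit : ∑ j ∈ t, w j * ((m i : ℝ) - S.c (z j) i)
          = (∑ j ∈ t, w j) * (m i : ℝ) - ∑ j ∈ t, w j * S.c (z j) i := by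
        rw [Finset.sum_mul, ← Finset.sum_sub_distrib]
        apply Finset.sum_congr rfl
        intro j _
        ring
      rw [hsplit, hw1, one_mul, ← hcxi, hxc i hi]
      ring
    have hterm : ∀ j ∈ t, 0 ≤ w j * ((m i : ℝ) - S.c (z j) i) := by
      intro j hj
      apply mul_nonneg (hw0 j hj)
      have := S.c_le_of_orbit m hdom (hzs j hj) i
      linarith
    have := (Finset.sum_eq_zero_iff_of_nonneg hterm).1 hzero k (ht'sub hk)
    have hwk : w k ≠ 0 := (Finset.mem_filter.1 hk).2
    have := mul_eq_zero.1 this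
    rcases this with h | h
    · exact absurd h hwk
    · linarith
  -- every point with nonzero weight is in the parabolic orbit
  have hzT : ∀ k ∈ t', z k ∈ (fun w : E ≃ₗᵢ[ℝ] E => w (S.lam m)) ''
      ((S.WI (S.comp0 m I) : Set (E ≃ₗᵢ[ℝ] E))) := by
    intro k hk
    obtain ⟨v, hv, hveq⟩ := S.key' m hdom hint I (hzs k (ht'sub hk))
      (fun i hi => hforced i hi k hk)
    exact ⟨v, hv, hveq.symm⟩
  rw [← hcm']
  apply Finset.centerMass_mem_convexHull t'
  · intro k hk
    exact hw0 k (ht'sub hk)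
  · rw [hsum']
    norm_num
  · exact hzT

end RootData

end PartH

variable {n : ℕ}

theorem face_eq_convexHull_parabolic_orbit' (S : RootData n E) (m : Fin n → ℕ)
    (hdom : S.Dominant (S.lam m)) (hint : S.IntegralDom m) (I : Set (Fin n)) :
    S.F_ m I =
      convexHull ℝ ((fun w : E ≃ₗᵢ[ℝ] E => w (S.lam m)) ''
        ((S.WI (S.comp0 m I) : Set (E ≃ₗᵢ[ℝ] E)))) := by
  apply Set.Subset.antisymm
  · exact S.F_subset_conv m hdom hint I
  · exact convexHull_min (S.T_subset_F m hdom I) (S.F_convex m I)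

/-- the standard parabolic face `F_I` is the convex hull of `W_{I̅⁰}·λ`. -/
theorem face_eq_convexHull_parabolic_orbit (S : RootData n E) (m : Fin n → ℕ)
    (hdom : S.Dominant (S.lam m)) (hint : S.IntegralDom m) (I : Set (Fin n)) :
    S.F_ m I =
      convexHull ℝ ((fun w : E ≃ₗᵢ[ℝ] E => w (S.lam m)) ''
        ((S.WI (S.comp0 m I) : Set (E ≃ₗᵢ[ℝ] E)))) := by
  exact face_eq_convexHull_parabolic_orbit' S m hdom hint I
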